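/- arXiv:1606.03709 — 4 statements merged into one kernel-verified Lean document; each statement's English description precedes it below -/
import Mathlib

section
/- For each m₀ ∈ P(𝕋), the map m ↦ sup_{t ∈ 𝕋} |m[0,t] − m₀[0,t]| from P(𝕋) to ℝ is continuous at m₀ with respect to the topology σ(P(𝕋),B(𝕋)). -/
open MeasureTheory Topology Filter Set

/-- The topology `σ(P(𝕋), B(𝕋))` on probability measures on `𝕋`: the coarsest topology making
`m ↦ ∫ φ dm` continuous for every bounded Borel measurable `φ : 𝕋 → ℝ`. -/
noncomputable def sigmaBTopology (𝕋 : Type*) [MeasurableSpace 𝕋] :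
    TopologicalSpace (ProbabilityMeasure 𝕋) :=
  ⨅ φ : {f : 𝕋 → ℝ // Measurable f ∧ ∃ C, ∀ t, |f t| ≤ C},
    TopologicalSpace.induced (fun m : ProbabilityMeasure 𝕋 => ∫ t, φ.1 t ∂(m : Measure 𝕋))
      inferInstance

private lemma gc_measA {𝕋s : Set ENNReal} (t : ENNReal) :
    MeasurableSet {s : 𝕋s | (s : ENNReal) ≤ t} :=
  measurable_subtype_coe measurableSet_Iic

private lemma gc_measB {𝕋s : Set ENNReal} (t : ENNReal) :
    MeasurableSet {s : 𝕋s | (s : ENNReal) < t} :=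
  measurable_subtype_coe measurableSet_Iio

/-- Any set of the form `{m | |m A - m₀ A| < δ}` is a `σ(P,B)`-neighborhood of `m₀`. -/
private lemma gc_mem_nhds {α : Type*} [MeasurableSpace α] (m₀ : ProbabilityMeasure α)
    {A : Set α} (hA : MeasurableSet A) {δ : ℝ} (hδ : 0 < δ) :
    {m : ProbabilityMeasure α |
      |((m : Measure α) A).toReal - ((m₀ : Measure α) A).toReal| < δ}
      ∈ @nhds _ (sigmaBTopology α) m₀ := by
  set φ : {f : α → ℝ // Measurable f ∧ ∃ C, ∀ t, |f t| ≤ C} :=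
    ⟨A.indicator 1, measurable_one.indicator hA, 1, fun t => by
      by_cases h : t ∈ A <;> simp [h]⟩ with hφ
  have h1 : sigmaBTopology α ≤ TopologicalSpace.induced
      (fun m : ProbabilityMeasure α => ∫ t, φ.1 t ∂(m : Measure α)) inferInstance :=
    iInf_le _ φ
  refine nhds_mono h1 ?_
  rw [nhds_induced]
  have hint : ∀ m : ProbabilityMeasure α,
      (∫ t, φ.1 t ∂(m : Measure α)) = ((m : Measure α) A).toReal := by
    intro m
    exact (integral_indicator_one (μ := (m : Measure α)) hA).trans (measureReal_def _ _)
  have hset : {m : ProbabilityMeasure α |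
      |((m : Measure α) A).toReal - ((m₀ : Measure α) A).toReal| < δ}
      = (fun m : ProbabilityMeasure α => ∫ t, φ.1 t ∂(m : Measure α)) ⁻¹'
        (Metric.ball (∫ t, φ.1 t ∂(m₀ : Measure α)) δ) := by
    ext m
    simp [Metric.mem_ball, Real.dist_eq, hint]
  rw [hset]
  exact preimage_mem_comap (Metric.ball_mem_nhds _ hδ)

/-- Right-continuity of the CDF at an infimum. -/
private lemma gc_sInf_le {𝕋s : Set ENNReal} (μ : Measure 𝕋s) [IsFiniteMeasure μ]
    {S : Set ENNReal} (hS : S.Nonempty) {c : ENNReal}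
    (h : ∀ t ∈ S, c ≤ μ {s : 𝕋s | (s : ENNReal) ≤ t}) :
    c ≤ μ {s : 𝕋s | (s : ENNReal) ≤ sInf S} := by
  obtain ⟨u, hu_anti, hu_tend, hu_mem⟩ := exists_seq_tendsto_sInf hS (OrderBot.bddBelow S)
  have h_iInf : ⨅ n, u n = sInf S :=
    tendsto_nhds_unique (tendsto_atTop_iInf hu_anti) hu_tend
  have hset : {s : 𝕋s | (s : ENNReal) ≤ sInf S}
      = ⋂ n, {s : 𝕋s | (s : ENNReal) ≤ u n} := by
    ext s
    simp only [Set.mem_iInter, Set.mem_setOf_eq, ← h_iInf, le_iInf_iff]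
  have hanti : Antitone (fun n => {s : 𝕋s | (s : ENNReal) ≤ u n}) :=
    fun i j hij s hs => le_trans hs (hu_anti hij)
  rw [hset, hanti.measure_iInter (fun n => (gc_measA (u n)).nullMeasurableSet)
    ⟨0, measure_ne_top μ _⟩]
  exact le_iInf fun n => h _ (hu_mem n)

/-- Control of the left limit of the CDF. -/
private lemma gc_B_le {𝕋s : Set ENNReal} (μ : Measure 𝕋s) (τ : ENNReal) {c : ENNReal}
    (h : ∀ t ∈ 𝕋s, t < τ → μ {s : 𝕋s | (s : ENNReal) ≤ t} ≤ c) :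
    μ {s : 𝕋s | (s : ENNReal) < τ} ≤ c := by
  set P : Set ENNReal := {t | t ∈ 𝕋s ∧ t < τ} with hP
  rcases P.eq_empty_or_nonempty with hPe | hPne
  · have hB : {s : 𝕋s | (s : ENNReal) < τ} = ∅ := by
      ext s
      simp only [Set.mem_setOf_eq, Set.mem_empty_iff_false, iff_false]
      intro hs
      exact Set.eq_empty_iff_forall_notMem.mp hPe _ ⟨s.2, hs⟩
    rw [hB]
    simp
  · by_cases hu : sSup P ∈ P
    · refine le_trans (measure_mono ?_) (h _ hu.1 hu.2)
      intro s hs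
      exact le_sSup (show (s : ENNReal) ∈ P from ⟨s.2, hs⟩)
    · obtain ⟨v, hv_mono, hv_tend, hv_mem⟩ := exists_seq_tendsto_sSup hPne (OrderTop.bddAbove P)
      have hmono : Monotone (fun n => {s : 𝕋s | (s : ENNReal) ≤ v n}) :=
        fun i j hij s hs => le_trans hs (hv_mono hij)
      have hsub : {s : 𝕋s | (s : ENNReal) < τ} ⊆ ⋃ n, {s : 𝕋s | (s : ENNReal) ≤ v n} := by
        intro s hs
        have hsP : (s : ENNReal) ∈ P := ⟨s.2, hs⟩
        have hlt : (s : ENNReal) < sSup P :=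
          lt_of_le_of_ne (le_sSup hsP) fun he => hu (he ▸ hsP)
        obtain ⟨n, hn⟩ := (hv_tend.eventually (lt_mem_nhds hlt)).exists
        exact Set.mem_iUnion.2 ⟨n, le_of_lt hn⟩
      refine le_trans (measure_mono hsub) ?_
      rw [hmono.measure_iUnion]
      exact iSup_le fun n => h _ (hv_mem n).1 (hv_mem n).2

/-- **Lemma (Glivenko–Cantelli-type).** For any `m₀ ∈ 𝒫(𝕋)`, the map
`m ↦ sup_{t ∈ 𝕋} |m[0,t] − m₀[0,t]|` is `σ(𝒫(𝕋), B(𝕋))`-continuous at `m₀`.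
Here `𝕋 ⊆ [0,∞]` is a compact time set, either discrete or an interval `[0,T]`. -/
theorem stmt_0 (𝕋s : Set ENNReal) (hcomp : IsCompact 𝕋s)
    (hform : DiscreteTopology 𝕋s ∨ ∃ a, 𝕋s = Set.Icc 0 a)
    (m₀ : ProbabilityMeasure 𝕋s) :
    @ContinuousAt (ProbabilityMeasure 𝕋s) ℝ (sigmaBTopology 𝕋s) _
      (fun m : ProbabilityMeasure 𝕋s =>
        ⨆ t : 𝕋s, |((m : Measure 𝕋s) {s | s ≤ t}).toReal
          - ((m₀ : Measure 𝕋s) {s | s ≤ t}).toReal|)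
      m₀ := by
  classical
  -- 𝕋s is nonempty since it carries a probability measure
  have hne : 𝕋s.Nonempty := by
    rcases 𝕋s.eq_empty_or_nonempty with h | h
    · exfalso
      haveI he : IsEmpty 𝕋s := Set.isEmpty_coe_sort.mpr h
      have h1 : (m₀ : Measure 𝕋s) Set.univ = 1 := measure_univ
      rw [Set.univ_eq_empty_iff.mpr he, measure_empty] at h1
      exact zero_ne_one h1
    · exact h
  haveI : Nonempty 𝕋s := hne.to_subtype
  set f : ProbabilityMeasure 𝕋s → ℝ := fun m =>
    ⨆ t : 𝕋s, |((m : Measure 𝕋s) {s | s ≤ t}).toReal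
      - ((m₀ : Measure 𝕋s) {s | s ≤ t}).toReal| with hf
  have hval : f m₀ = 0 := by
    simp [hf, sub_self, abs_zero, ciSup_const]
  show Filter.Tendsto f (@nhds _ (sigmaBTopology 𝕋s) m₀) (𝓝 (f m₀))
  rw [hval, Metric.tendsto_nhds]
  intro ε hε
  -- choose N with 1/N < ε/4
  obtain ⟨N, hN4⟩ := exists_nat_gt (4 / ε)
  have hNpos : 0 < (N : ℝ) := lt_trans (by positivity) hN4
  have hNinv : (1 : ℝ) / N < ε / 4 := by
    rw [div_lt_div_iff₀ hNpos (by norm_num)]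
    have h4 : 4 < (N : ℝ) * ε := by
      have := (div_lt_iff₀ hε).mp hN4
      linarith
    linarith
  set δ : ℝ := ε / 4 with hδdef
  have hδpos : 0 < δ := by positivity
  -- the top of 𝕋s
  have htmax : sSup 𝕋s ∈ 𝕋s := hcomp.sSup_mem hne
  have hAmax : {s : 𝕋s | (s : ENNReal) ≤ sSup 𝕋s} = Set.univ :=
    Set.eq_univ_of_forall fun s => le_sSup s.2
  -- quantile points
  have hquant : ∃ τ : ℕ → ENNReal, ∀ k, k ≤ N →
      τ k ∈ 𝕋s ∧
      ENNReal.ofReal ((k : ℝ) / N) ≤ (m₀ : Measure 𝕋s) {s : 𝕋s | (s : ENNReal) ≤ τ k} ∧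
      (m₀ : Measure 𝕋s) {s : 𝕋s | (s : ENNReal) < τ k} ≤ ENNReal.ofReal ((k : ℝ) / N) ∧
      (∀ u ∈ 𝕋s, ENNReal.ofReal ((k : ℝ) / N)
        ≤ (m₀ : Measure 𝕋s) {s : 𝕋s | (s : ENNReal) ≤ u} → τ k ≤ u) := by
    refine ⟨fun k => sInf {u | u ∈ 𝕋s ∧ ENNReal.ofReal ((k : ℝ) / N)
      ≤ (m₀ : Measure 𝕋s) {s : 𝕋s | (s : ENNReal) ≤ u}}, fun k hk => ?_⟩
    have hSne : {u | u ∈ 𝕋s ∧ ENNReal.ofReal ((k : ℝ) / N)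
        ≤ (m₀ : Measure 𝕋s) {s : 𝕋s | (s : ENNReal) ≤ u}}.Nonempty := by
      refine ⟨sSup 𝕋s, htmax, ?_⟩
      rw [hAmax, measure_univ]
      exact ENNReal.ofReal_le_one.mpr ((div_le_one hNpos).mpr (by exact_mod_cast hk))
    refine ⟨?_, ?_, ?_, ?_⟩
    · exact (hcomp.isClosed.closure_subset_iff.mpr (fun u hu => hu.1))
        (csInf_mem_closure hSne (OrderBot.bddBelow _))
    · exact gc_sInf_le _ hSne fun u hu => hu.2
    · refine gc_B_le _ _ fun u hu hlt => ?_
      by_contra hcon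
      push_neg at hcon
      have hmem : u ∈ {u | u ∈ 𝕋s ∧ ENNReal.ofReal ((k : ℝ) / N)
          ≤ (m₀ : Measure 𝕋s) {s : 𝕋s | (s : ENNReal) ≤ u}} := ⟨hu, hcon.le⟩
      exact absurd (sInf_le hmem) (not_le.mpr hlt)
    · exact fun u hu hcu => sInf_le ⟨hu, hcu⟩
  obtain ⟨τ, hτ⟩ := hquant
  have hτ0 : ∀ t : 𝕋s, τ 0 ≤ (t : ENNReal) := by
    intro t
    refine (hτ 0 (Nat.zero_le N)).2.2.2 _ t.2 ?_
    simp
  -- the neighborhood event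
  have hEmem : (⋂ k ∈ Finset.range (N + 1),
      ({m : ProbabilityMeasure 𝕋s |
          |((m : Measure 𝕋s) {s : 𝕋s | (s : ENNReal) ≤ τ k}).toReal
            - ((m₀ : Measure 𝕋s) {s : 𝕋s | (s : ENNReal) ≤ τ k}).toReal| < δ} ∩
       {m : ProbabilityMeasure 𝕋s |
          |((m : Measure 𝕋s) {s : 𝕋s | (s : ENNReal) < τ k}).toReal
            - ((m₀ : Measure 𝕋s) {s : 𝕋s | (s : ENNReal) < τ k}).toReal| < δ}))
      ∈ @nhds _ (sigmaBTopology 𝕋s) m₀ := by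
    refine (Filter.biInter_finset_mem _).mpr fun k _ => ?_
    exact Filter.inter_mem (gc_mem_nhds m₀ (gc_measA _) hδpos)
      (gc_mem_nhds m₀ (gc_measB _) hδpos)
  filter_upwards [hEmem] with m hm
  have hmA : ∀ k, k ≤ N →
      |((m : Measure 𝕋s) {s : 𝕋s | (s : ENNReal) ≤ τ k}).toReal
        - ((m₀ : Measure 𝕋s) {s : 𝕋s | (s : ENNReal) ≤ τ k}).toReal| < δ :=
    fun k hk => (Set.mem_iInter₂.mp hm k (Finset.mem_range.mpr (Nat.lt_succ_of_le hk))).1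
  have hmB : ∀ k, k ≤ N →
      |((m : Measure 𝕋s) {s : 𝕋s | (s : ENNReal) < τ k}).toReal
        - ((m₀ : Measure 𝕋s) {s : 𝕋s | (s : ENNReal) < τ k}).toReal| < δ :=
    fun k hk => (Set.mem_iInter₂.mp hm k (Finset.mem_range.mpr (Nat.lt_succ_of_le hk))).2
  -- monotonicity and boundedness helpers
  have mono_m : ∀ {A B : Set 𝕋s}, A ⊆ B →
      ((m : Measure 𝕋s) A).toReal ≤ ((m : Measure 𝕋s) B).toReal :=
    fun h => ENNReal.toReal_mono (measure_ne_top _ _) (measure_mono h)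
  have mono_0 : ∀ {A B : Set 𝕋s}, A ⊆ B →
      ((m₀ : Measure 𝕋s) A).toReal ≤ ((m₀ : Measure 𝕋s) B).toReal :=
    fun h => ENNReal.toReal_mono (measure_ne_top _ _) (measure_mono h)
  have le1m : ∀ A : Set 𝕋s, ((m : Measure 𝕋s) A).toReal ≤ 1 := fun A =>
    ENNReal.toReal_le_of_le_ofReal zero_le_one (by simpa [ENNReal.ofReal_one] using
      (prob_le_one : (m : Measure 𝕋s) A ≤ 1))
  have le10 : ∀ A : Set 𝕋s, ((m₀ : Measure 𝕋s) A).toReal ≤ 1 := fun A =>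
    ENNReal.toReal_le_of_le_ofReal zero_le_one (by simpa [ENNReal.ofReal_one] using
      (prob_le_one : (m₀ : Measure 𝕋s) A ≤ 1))
  -- real-valued versions of the quantile properties
  have hτAr : ∀ k, k ≤ N →
      (k : ℝ) / N ≤ ((m₀ : Measure 𝕋s) {s : 𝕋s | (s : ENNReal) ≤ τ k}).toReal :=
    fun k hk => (ENNReal.ofReal_le_iff_le_toReal (measure_ne_top _ _)).mp (hτ k hk).2.1
  have hτBr : ∀ k, k ≤ N →
      ((m₀ : Measure 𝕋s) {s : 𝕋s | (s : ENNReal) < τ k}).toReal ≤ (k : ℝ) / N :=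
    fun k hk => ENNReal.toReal_le_of_le_ofReal (by positivity) (hτ k hk).2.2.1
  -- the pointwise bound
  have hbound : ∀ t : 𝕋s,
      |((m : Measure 𝕋s) {s | s ≤ t}).toReal
        - ((m₀ : Measure 𝕋s) {s | s ≤ t}).toReal| ≤ δ + 1 / N := by
    intro t
    have hsetrfl : {s : 𝕋s | s ≤ t} = {s : 𝕋s | (s : ENNReal) ≤ (t : ENNReal)} := rfl
    rw [hsetrfl]
    set P : ℕ → Prop := fun j => τ j ≤ (t : ENNReal) with hPdef
    have hP0 : P 0 := hτ0 t
    set k : ℕ := Nat.findGreatest P N with hkdef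
    have hkN : k ≤ N := Nat.findGreatest_le N
    have hPk : P k := Nat.findGreatest_spec (Nat.zero_le N) hP0
    have hsub1 : {s : 𝕋s | (s : ENNReal) ≤ τ k} ⊆ {s : 𝕋s | (s : ENNReal) ≤ (t : ENNReal)} :=
      fun s hs => le_trans hs hPk
    have habsA := abs_sub_le_iff.mp (hmA k hkN).le
    by_cases hkeq : k = N
    · -- top case : the CDFs are within δ of 1
      rw [hkeq] at hsub1 habsA
      have hNN : ((N : ℝ)) / N = 1 := div_self (ne_of_gt hNpos)
      have hb1 : (1 : ℝ) ≤ ((m₀ : Measure 𝕋s) {s : 𝕋s | (s : ENNReal) ≤ (t : ENNReal)}).toReal := by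
        have h := le_trans (hτAr N le_rfl) (mono_0 hsub1)
        rw [hNN] at h
        exact h
      have hb2 := le10 {s : 𝕋s | (s : ENNReal) ≤ (t : ENNReal)}
      have ha1 : (1 : ℝ) - δ ≤ ((m : Measure 𝕋s) {s : 𝕋s | (s : ENNReal) ≤ (t : ENNReal)}).toReal := by
        have h1 := hτAr N le_rfl
        have h2 := habsA.2
        have h3 := mono_m hsub1
        rw [hNN] at h1
        linarith
      have ha2 := le1m {s : 𝕋s | (s : ENNReal) ≤ (t : ENNReal)}
      have hpos : (0:ℝ) < 1 / N := by positivity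
      rw [abs_sub_le_iff]
      constructor
      · linarith
      · linarith
    · -- middle case : τ k ≤ t < τ (k+1)
      have hk1N : k + 1 ≤ N := Nat.succ_le_of_lt (lt_of_le_of_ne hkN hkeq)
      have hnP : ¬ P (k + 1) := Nat.findGreatest_is_greatest (Nat.lt_succ_self k) hk1N
      have htlt : (t : ENNReal) < τ (k + 1) := lt_of_not_ge hnP
      have hsub2 : {s : 𝕋s | (s : ENNReal) ≤ (t : ENNReal)}
          ⊆ {s : 𝕋s | (s : ENNReal) < τ (k + 1)} :=
        fun s hs => lt_of_le_of_lt hs htlt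
      have habsB := abs_sub_le_iff.mp (hmB (k + 1) hk1N).le
      have hb1 : (k : ℝ) / N ≤ ((m₀ : Measure 𝕋s) {s : 𝕋s | (s : ENNReal) ≤ (t : ENNReal)}).toReal :=
        le_trans (hτAr k hkN) (mono_0 hsub1)
      have hb2 : ((m₀ : Measure 𝕋s) {s : 𝕋s | (s : ENNReal) ≤ (t : ENNReal)}).toReal
          ≤ ((k : ℝ) + 1) / N := by
        have := le_trans (mono_0 hsub2) (hτBr (k + 1) hk1N)
        push_cast at this
        linarith
      have ha1 : (k : ℝ) / N - δ ≤ ((m : Measure 𝕋s) {s : 𝕋s | (s : ENNReal) ≤ (t : ENNReal)}).toReal := by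
        have h1 := hτAr k hkN
        have h2 := habsA.2
        have h3 := mono_m hsub1
        linarith
      have ha2 : ((m : Measure 𝕋s) {s : 𝕋s | (s : ENNReal) ≤ (t : ENNReal)}).toReal
          ≤ ((k : ℝ) + 1) / N + δ := by
        have h1 := hτBr (k + 1) hk1N
        have h2 := habsB.1
        have h3 := mono_m hsub2
        push_cast at h1 h2
        linarith
      have hsplit : ((k : ℝ) + 1) / N = (k : ℝ) / N + 1 / N := add_div _ _ _
      rw [abs_sub_le_iff]
      constructor
      · linarith
      · linarith
  -- conclude
  have hfle : f m ≤ δ + 1 / N := by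
    rw [hf]
    exact Real.iSup_le (fun t => hbound t) (by positivity)
  have hbdd : BddAbove (Set.range fun t : 𝕋s =>
      |((m : Measure 𝕋s) {s | s ≤ t}).toReal - ((m₀ : Measure 𝕋s) {s | s ≤ t}).toReal|) := by
    refine ⟨2, ?_⟩
    rintro x ⟨t, rfl⟩
    have h1 := le1m {s : 𝕋s | s ≤ t}
    have h2 := le10 {s : 𝕋s | s ≤ t}
    have h3 : (0:ℝ) ≤ ((m : Measure 𝕋s) {s : 𝕋s | s ≤ t}).toReal := ENNReal.toReal_nonneg
    have h4 : (0:ℝ) ≤ ((m₀ : Measure 𝕋s) {s : 𝕋s | s ≤ t}).toReal := ENNReal.toReal_nonneg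
    rw [abs_sub_le_iff]
    constructor <;> linarith
  have hfnonneg : 0 ≤ f m := by
    rw [hf]
    obtain ⟨t⟩ := (inferInstance : Nonempty 𝕋s)
    exact le_trans (abs_nonneg _) (le_ciSup hbdd t)
  rw [Real.dist_eq, sub_zero, abs_of_nonneg hfnonneg]
  calc f m ≤ δ + 1 / N := hfle
    _ < ε / 4 + ε / 4 := by rw [hδdef]; linarith
    _ ≤ ε := by linarith
end

section
/- Let G : [0,1] → ℝ be continuous and differentiable on (0,1). Suppose that for every pair m, m̃ of Borel probability measures on [0,T] satisfying m[0,t] ≥ m̃[0,t] for all t ∈ [0,T], the function t ↦ G(m̃[0,t]) − G(m[0,t]) is nondecreasing on [0,T]. Then G is constant. -/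
open MeasureTheory Set

/-- **Proposition (no nontrivial interaction through `m[0,t]` under (B.2)).**
Let `G : [0,1] → ℝ` be continuous and differentiable on `(0,1)`. If for all Borel probability
measures `m, m̃` on `[0,T]` with `m[0,t] ≥ m̃[0,t]` for all `t`, the map
`t ↦ G(m̃[0,t]) − G(m[0,t])` is nondecreasing on `[0,T]`, then `G` is constant. -/
theorem stmt_4 (T : ℝ) (hT : 0 < T) (G : ℝ → ℝ)
    (hGcont : ContinuousOn G (Icc 0 1))
    (hGdiff : ∀ u ∈ Ioo (0:ℝ) 1, DifferentiableAt ℝ G u)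
    (h : ∀ (m m' : Measure (Icc (0:ℝ) T)), IsProbabilityMeasure m → IsProbabilityMeasure m' →
      (∀ t : Icc (0:ℝ) T, m' {s | s ≤ t} ≤ m {s | s ≤ t}) →
      Monotone fun t : Icc (0:ℝ) T =>
        G ((m' {s | s ≤ t}).toReal) - G ((m {s | s ≤ t}).toReal)) :
    ∀ u ∈ Icc (0:ℝ) 1, ∀ v ∈ Icc (0:ℝ) 1, G u = G v := by
  have hT2 : T / 2 ∈ Icc (0:ℝ) T := ⟨by linarith, by linarith⟩
  set t0 : Icc (0:ℝ) T := ⟨0, le_refl 0, hT.le⟩ with ht0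
  set tm : Icc (0:ℝ) T := ⟨T / 2, hT2⟩ with htm
  set tT : Icc (0:ℝ) T := ⟨T, hT.le, le_refl T⟩ with htT
  have dapp : ∀ x t : Icc (0:ℝ) T,
      Measure.dirac x {s | s ≤ t} = if x ≤ t then 1 else 0 := by
    intro x t
    rw [Measure.dirac_apply]
    by_cases hx : x ≤ t
    · simp [Set.indicator_apply, hx]
    · simp [Set.indicator_apply, hx]
  have t0le : ∀ t : Icc (0:ℝ) T, t0 ≤ t := fun t => Subtype.mk_le_mk.mpr t.2.1
  have letT : ∀ t : Icc (0:ℝ) T, t ≤ tT := fun t => Subtype.mk_le_mk.mpr t.2.2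
  have hnT0 : ¬ (tT ≤ t0) := by
    simp only [htT, ht0, Subtype.mk_le_mk]; intro hle; have : T ≤ 0 := hle; linarith
  have hnTm : ¬ (tT ≤ tm) := by
    simp only [htT, htm, Subtype.mk_le_mk]; intro hle; have : T ≤ T / 2 := hle; linarith
  have hnm0 : ¬ (tm ≤ t0) := by
    simp only [htm, ht0, Subtype.mk_le_mk]; intro hle; have : T / 2 ≤ 0 := hle; linarith
  -- key inequalities
  have key : ∀ a b : ℝ, 0 ≤ a → a ≤ b → b ≤ 1 → G a = G b := by
    intro a b ha hab hb1
    have ha1 : a ≤ 1 := le_trans hab hb1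
    have hb : 0 ≤ b := le_trans ha hab
    -- two-point measure
    set m2 : ℝ → Measure (Icc (0:ℝ) T) := fun c =>
      ENNReal.ofReal c • Measure.dirac t0 + ENNReal.ofReal (1 - c) • Measure.dirac tT
      with hm2
    have m2app : ∀ c : ℝ, 0 ≤ c → c ≤ 1 → ∀ t : Icc (0:ℝ) T,
        m2 c {s | s ≤ t} = if tT ≤ t then 1 else ENNReal.ofReal c := by
      intro c hc hc1 t
      simp only [hm2, Measure.add_apply, Measure.smul_apply, smul_eq_mul, dapp,
        if_pos (t0le t)]
      by_cases hTt : tT ≤ t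
      · rw [if_pos hTt, mul_one, mul_one, ← ENNReal.ofReal_add hc (by linarith)]
        simp [hTt]
      · rw [if_neg hTt, mul_one, mul_zero, add_zero]
        simp [hTt]
    have m2prob : ∀ c : ℝ, 0 ≤ c → c ≤ 1 → IsProbabilityMeasure (m2 c) := by
      intro c hc hc1
      constructor
      simp only [hm2, Measure.add_apply, Measure.smul_apply, smul_eq_mul,
        measure_univ, mul_one]
      rw [← ENNReal.ofReal_add hc (by linarith)]
      norm_num
    -- three-point measure
    set m3 : Measure (Icc (0:ℝ) T) :=
      ENNReal.ofReal a • Measure.dirac t0 + ENNReal.ofReal (b - a) • Measure.dirac tm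
        + ENNReal.ofReal (1 - b) • Measure.dirac tT with hm3
    have m3app : ∀ t : Icc (0:ℝ) T,
        m3 {s | s ≤ t} = if tT ≤ t then 1 else
          (if tm ≤ t then ENNReal.ofReal b else ENNReal.ofReal a) := by
      intro t
      simp only [hm3, Measure.add_apply, Measure.smul_apply, smul_eq_mul, dapp,
        if_pos (t0le t)]
      by_cases hTt : tT ≤ t
      · have hmt : tm ≤ t := le_trans (Subtype.mk_le_mk.mpr (by linarith : T / 2 ≤ T)) hTt
        rw [if_pos hTt, if_pos hmt, mul_one, mul_one, mul_one,
          ← ENNReal.ofReal_add ha (by linarith), ← ENNReal.ofReal_add (by linarith) (by linarith)]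
        simp [hTt]
      · rw [if_neg hTt, mul_zero, add_zero, mul_one]
        by_cases hmt : tm ≤ t
        · rw [if_pos hmt, if_pos hmt, mul_one, ← ENNReal.ofReal_add ha (by linarith)]
          simp [hTt, hmt]
        · rw [if_neg hmt, if_neg hmt, mul_zero, add_zero]
          simp [hTt, hmt]
    have m3prob : IsProbabilityMeasure m3 := by
      constructor
      simp only [hm3, Measure.add_apply, Measure.smul_apply, smul_eq_mul,
        measure_univ, mul_one]
      rw [← ENNReal.ofReal_add ha (by linarith), ← ENNReal.ofReal_add (by linarith) (by linarith)]
      norm_num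
    -- inequality 1 : G a ≤ G b
    have h1 : G a ≤ G b := by
      have hdom : ∀ t : Icc (0:ℝ) T, m2 a {s | s ≤ t} ≤ m2 b {s | s ≤ t} := by
        intro t
        rw [m2app a ha ha1 t, m2app b hb hb1 t]
        by_cases hTt : tT ≤ t
        · simp [hTt]
        · simp only [if_neg hTt]
          exact ENNReal.ofReal_le_ofReal hab
      have hmono := h (m2 b) (m2 a) (m2prob b hb hb1) (m2prob a ha ha1) hdom (t0le tT)
      simp only [m2app a ha ha1, m2app b hb hb1, if_neg hnT0, if_pos (le_refl tT)] at hmono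
      rw [ENNReal.toReal_ofReal ha, ENNReal.toReal_ofReal hb, ENNReal.toReal_one] at hmono
      linarith
    -- inequality 2 : G b ≤ G a
    have h2 : G b ≤ G a := by
      have hdom : ∀ t : Icc (0:ℝ) T, m2 a {s | s ≤ t} ≤ m3 {s | s ≤ t} := by
        intro t
        rw [m2app a ha ha1 t, m3app t]
        by_cases hTt : tT ≤ t
        · simp [hTt]
        · simp only [if_neg hTt]
          by_cases hmt : tm ≤ t
          · rw [if_pos hmt]; exact ENNReal.ofReal_le_ofReal hab
          · rw [if_neg hmt]
      have hmono := h m3 (m2 a) m3prob (m2prob a ha ha1) hdom (t0le tm)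
      simp only [m2app a ha ha1, m3app, if_neg hnT0, if_neg hnTm, if_neg hnm0,
        if_pos (le_refl tm)] at hmono
      rw [ENNReal.toReal_ofReal ha, ENNReal.toReal_ofReal hb] at hmono
      linarith
    linarith
  intro u hu v hv
  rcases le_total u v with huv | huv
  · exact key u v hu.1 huv hv.2
  · exact (key v u hv.1 huv hu.2).symm
end

section
/- Let (Ω, ℱ, P) be a probability space with a right-continuous filtration 𝔽 = (ℱ_t)_{t ∈ 𝕋} indexed by a compact time set 𝕋 ⊆ [0,∞] that is either discrete or an interval [0,T]. Then the set 𝒮 of (equivalence classes of almost surely equal) 𝕋-valued 𝔽-stopping times, partially ordered by almost sure inequality, is a complete lattice: for every subset Φ ⊆ 𝒮, the essential supremum of Φ and the essential infimum of Φ are each almost surely equal to an 𝔽-stopping time, and these provide a least upper bound and greatest lower bound of Φ in 𝒮. -/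
open MeasureTheory Set Filter Topology

noncomputable def stlPsi (x : ENNReal) : ENNReal := (x⁻¹ + 1)⁻¹

lemma stlPsi_le_one (x : ENNReal) : stlPsi x ≤ 1 :=
  ENNReal.inv_le_one.mpr le_add_self

lemma stlPsi_strictMono : StrictMono stlPsi := by
  intro x y h
  rw [stlPsi, stlPsi, ENNReal.inv_lt_inv]
  exact ENNReal.add_lt_add_right ENNReal.one_ne_top (ENNReal.inv_lt_inv.mpr h)

lemma stlPsi_measurable : Measurable stlPsi :=
  ((continuous_inv.add continuous_const).inv).measurable

section

variable {Ω : Type*} {mΩ : MeasurableSpace Ω} {𝕋s : Set ENNReal}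

lemma stl_exists_sup (hcl : IsClosed 𝕋s) {c : ENNReal} (hne : (𝕋s ∩ Iic c).Nonempty) :
    ∃ q : 𝕋s, (q : ENNReal) ≤ c ∧ ∀ x : 𝕋s, (x : ENNReal) ≤ c ↔ x ≤ q := by
  have hq : sSup (𝕋s ∩ Iic c) ∈ 𝕋s :=
    hcl.closure_subset (closure_mono inter_subset_left
      (csSup_mem_closure hne (OrderTop.bddAbove _)))
  refine ⟨⟨_, hq⟩, sSup_le fun x hx => hx.2, fun x => ⟨fun hx => ?_, fun hx => ?_⟩⟩
  · exact Subtype.coe_le_coe.mp (le_sSup ⟨x.2, hx⟩)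
  · exact (Subtype.coe_le_coe.mpr hx).trans (sSup_le fun y hy => hy.2)

lemma stl_exists_lt_seq (hcl : IsClosed 𝕋s) {c : ENNReal} (hne : (𝕋s ∩ Iio c).Nonempty) :
    ∃ D : ℕ → 𝕋s, (∀ k, (D k : ENNReal) < c) ∧
      ∀ x : 𝕋s, (x : ENNReal) < c ↔ ∃ k, x ≤ D k := by
  set A := 𝕋s ∩ Iio c with hA
  have hq𝕋 : sSup A ∈ 𝕋s :=
    hcl.closure_subset (closure_mono inter_subset_left
      (csSup_mem_closure hne (OrderTop.bddAbove _)))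
  have hqc : sSup A ≤ c := sSup_le fun x hx => le_of_lt hx.2
  rcases lt_or_eq_of_le hqc with h | h
  · refine ⟨fun _ => ⟨sSup A, hq𝕋⟩, fun _ => h, fun x => ⟨fun hx => ⟨0, ?_⟩, fun ⟨k, hk⟩ => ?_⟩⟩
    · exact Subtype.coe_le_coe.mp (le_sSup ⟨x.2, hx⟩)
    · exact lt_of_le_of_lt (Subtype.coe_le_coe.mpr hk) h
  · obtain ⟨u, _, htend, hmem⟩ := exists_seq_tendsto_sSup hne (OrderTop.bddAbove A)
    refine ⟨fun k => ⟨u k, (hmem k).1⟩, fun k => (hmem k).2, fun x => ⟨fun hx => ?_, ?_⟩⟩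
    · have hle : sSup A ≤ ⨆ k, u k :=
        le_of_tendsto htend (Eventually.of_forall fun k => le_iSup u k)
      have : (x : ENNReal) < ⨆ k, u k := lt_of_lt_of_le (h ▸ hx) hle
      obtain ⟨k, hk⟩ := lt_iSup_iff.mp this
      exact ⟨k, le_of_lt hk⟩
    · rintro ⟨k, hk⟩
      exact lt_of_le_of_lt (Subtype.coe_le_coe.mpr hk) (hmem k).2

lemma stl_exists_gt_seq (hcl : IsClosed 𝕋s) {t s : ENNReal} (hs : s ∈ 𝕋s) (hts : t < s) :
    ∃ D : ℕ → 𝕋s, (∀ k, t < (D k : ENNReal) ∧ (D k : ENNReal) ≤ s) ∧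
      ∀ x : 𝕋s, (x : ENNReal) ≤ t ↔ ∀ k, (x : ENNReal) < D k := by
  set A := 𝕋s ∩ Ioc t s with hA
  have hne : A.Nonempty := ⟨s, hs, hts, le_rfl⟩
  have hq𝕋 : sInf A ∈ 𝕋s :=
    hcl.closure_subset (closure_mono inter_subset_left
      (csInf_mem_closure hne (OrderBot.bddBelow _)))
  have htq : t ≤ sInf A := le_sInf fun x hx => le_of_lt hx.2.1
  rcases eq_or_lt_of_le htq with h | h
  · obtain ⟨u, _, htend, hmem⟩ := exists_seq_tendsto_sInf hne (OrderBot.bddBelow A)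
    refine ⟨fun k => ⟨u k, (hmem k).1⟩, fun k => ⟨(hmem k).2.1, (hmem k).2.2⟩, fun x => ?_⟩
    constructor
    · intro hx k
      exact lt_of_le_of_lt hx (hmem k).2.1
    · intro hx
      have h1 : (x : ENNReal) ≤ ⨅ k, u k := le_iInf fun k => le_of_lt (hx k)
      have h2 : (⨅ k, u k) ≤ sInf A :=
        ge_of_tendsto htend (Eventually.of_forall fun k => iInf_le u k)
      exact (h1.trans h2).trans h.symm.le
  · have hqA : sInf A ∈ A := ⟨hq𝕋, h, sInf_le (⟨hs, hts, le_rfl⟩ : s ∈ A)⟩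
    refine ⟨fun _ => ⟨sInf A, hq𝕋⟩, fun _ => ⟨h, hqA.2.2⟩, fun x => ?_⟩
    constructor
    · intro hx _
      exact lt_of_le_of_lt hx h
    · intro hx
      by_contra hxt
      push_neg at hxt
      have hxA : (x : ENNReal) ∈ A := ⟨x.2, hxt, le_of_lt ((hx 0).trans_le hqA.2.2)⟩
      exact absurd (sInf_le hxA) (not_le.mpr (hx 0))

lemma stl_coe_measurable (hcl : IsClosed 𝕋s) (F : Filtration 𝕋s mΩ) {τ : Ω → 𝕋s}
    (hτ : IsStoppingTime F (fun ω => (τ ω : WithTop 𝕋s))) : Measurable fun ω => (τ ω : ENNReal) := by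
  replace hτ : ∀ i, MeasurableSet[F i] {ω | τ ω ≤ i} := fun i => by
    have h := hτ i; simp only [WithTop.coe_le_coe] at h; exact h
  apply measurable_of_Iic
  intro c
  by_cases hne : (𝕋s ∩ Iic c).Nonempty
  · obtain ⟨q, _, hq⟩ := stl_exists_sup hcl hne
    have heq : (fun ω => (τ ω : ENNReal)) ⁻¹' Iic c = {ω | τ ω ≤ q} := by
      ext ω
      simpa using hq (τ ω)
    rw [heq]
    exact F.le q _ (hτ q)
  · have heq : (fun ω => (τ ω : ENNReal)) ⁻¹' Iic c = ∅ := by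
      ext ω
      simp only [mem_preimage, mem_Iic, mem_empty_iff_false, iff_false]
      exact fun hle => hne ⟨_, (τ ω).2, hle⟩
    rw [heq]
    exact MeasurableSet.empty

lemma stl_lt_measurable (hcl : IsClosed 𝕋s) (F : Filtration 𝕋s mΩ) {τ : Ω → 𝕋s}
    (hτ : IsStoppingTime F (fun ω => (τ ω : WithTop 𝕋s))) {c : ENNReal} {r : 𝕋s} (hcr : c ≤ (r : ENNReal)) :
    MeasurableSet[F r] {ω | (τ ω : ENNReal) < c} := by
  replace hτ : ∀ i, MeasurableSet[F i] {ω | τ ω ≤ i} := fun i => by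
    have h := hτ i; simp only [WithTop.coe_le_coe] at h; exact h
  by_cases hne : (𝕋s ∩ Iio c).Nonempty
  · obtain ⟨D, hDc, hD⟩ := stl_exists_lt_seq hcl hne
    have heq : {ω | (τ ω : ENNReal) < c} = ⋃ k, {ω | τ ω ≤ D k} := by
      ext ω
      simpa using hD (τ ω)
    rw [heq]
    refine MeasurableSet.iUnion fun k => ?_
    exact F.mono (show D k ≤ r from le_of_lt ((hDc k).trans_le hcr)) _ (hτ (D k))
  · have heq : {ω | (τ ω : ENNReal) < c} = ∅ := by
      ext ω
      simp only [mem_setOf_eq, mem_empty_iff_false, iff_false]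
      exact fun hlt => hne ⟨_, (τ ω).2, hlt⟩
    rw [heq]
    exact @MeasurableSet.empty _ (F r)

end

/-- **Theorem (the lattice of stopping times is complete).**
Let `𝕋 ⊆ [0,∞]` be a compact time set (discrete or an interval `[0,T]`), and let
`F` be a right-continuous filtration on a probability space `(Ω, P)`. Then for every family
`Φ` of `𝕋`-valued `F`-stopping times, the essential supremum and the essential infimum of `Φ`
are (a.s. equal to) `F`-stopping times; i.e. there are stopping times which are a.s. upper
(resp. lower) bounds of `Φ` and are a.s. below (resp. above) every measurable a.s. upper
(resp. lower) bound, so the set of a.s.-equivalence classes of stopping times with the a.s.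
order is a complete lattice. -/
theorem stmt_14 (𝕋s : Set ENNReal) (hcomp : IsCompact 𝕋s) [Nonempty 𝕋s]
    (hform : DiscreteTopology 𝕋s ∨ ∃ a, 𝕋s = Set.Icc 0 a)
    {Ω : Type*} {mΩ : MeasurableSpace Ω} (P : Measure Ω) [IsProbabilityMeasure P]
    (F : Filtration 𝕋s mΩ)
    (hrc : ∀ t : 𝕋s, (∃ s, t < s) → F t = ⨅ s : {s : 𝕋s // t < s}, F s.1)
    (Φ : Set (Ω → 𝕋s)) (hΦ : ∀ τ ∈ Φ, IsStoppingTime F (fun ω => (τ ω : WithTop 𝕋s))) :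
    (∃ σmax : Ω → 𝕋s, IsStoppingTime F (fun ω => (σmax ω : WithTop 𝕋s)) ∧
      (∀ τ ∈ Φ, ∀ᵐ ω ∂P, τ ω ≤ σmax ω) ∧
      (∀ Y : Ω → 𝕋s, Measurable Y → (∀ τ ∈ Φ, ∀ᵐ ω ∂P, τ ω ≤ Y ω) →
        ∀ᵐ ω ∂P, σmax ω ≤ Y ω)) ∧
    (∃ σmin : Ω → 𝕋s, IsStoppingTime F (fun ω => (σmin ω : WithTop 𝕋s)) ∧
      (∀ τ ∈ Φ, ∀ᵐ ω ∂P, σmin ω ≤ τ ω) ∧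
      (∀ Y : Ω → 𝕋s, Measurable Y → (∀ τ ∈ Φ, ∀ᵐ ω ∂P, Y ω ≤ τ ω) →
        ∀ᵐ ω ∂P, Y ω ≤ σmin ω)) := by
  classical
  have hcl : IsClosed 𝕋s := hcomp.isClosed
  have hTne : 𝕋s.Nonempty := Set.nonempty_coe_sort.mp ‹_›
  have hbotmem : sInf 𝕋s ∈ 𝕋s := hcomp.sInf_mem hTne
  have htopmem : sSup 𝕋s ∈ 𝕋s := hcomp.sSup_mem hTne
  set bo : 𝕋s := ⟨sInf 𝕋s, hbotmem⟩ with hbo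
  set tp : 𝕋s := ⟨sSup 𝕋s, htopmem⟩ with htp
  have hbot_le : ∀ x : 𝕋s, bo ≤ x := fun x => Subtype.coe_le_coe.mp (sInf_le x.2)
  have hle_top : ∀ x : 𝕋s, x ≤ tp := fun x => Subtype.coe_le_coe.mp (le_sSup x.2)
  constructor
  · -- supremum part
    set Φ' : Set (Ω → 𝕋s) := insert (fun _ => bo) Φ with hΦ'def
    have hΦ' : ∀ τ ∈ Φ', IsStoppingTime F (fun ω => (τ ω : WithTop 𝕋s)) := by
      rintro τ hτ
      rcases Set.mem_insert_iff.mp hτ with rfl | hτ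
      · exact isStoppingTime_const F bo
      · exact hΦ τ hτ
    set A : Set ENNReal := {r | ∃ u : ℕ → Ω → 𝕋s, (∀ n, u n ∈ Φ') ∧
        r = ∫⁻ ω, stlPsi (⨆ n, (u n ω : ENNReal)) ∂P} with hAdef
    have hAne : A.Nonempty :=
      ⟨_, fun _ _ => bo, fun _ => Set.mem_insert _ _, rfl⟩
    obtain ⟨a, hamono, hatend, haA⟩ := exists_seq_tendsto_sSup hAne (OrderTop.bddAbove A)
    choose u hu hval using haA
    set v : ℕ → Ω → 𝕋s := fun n => u (Nat.unpair n).1 (Nat.unpair n).2 with hvdef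
    have hv : ∀ n, v n ∈ Φ' := fun n => hu _ _
    have hvmeas : ∀ n, Measurable fun ω => (v n ω : ENNReal) :=
      fun n => stl_coe_measurable hcl F (hΦ' _ (hv n))
    set g : Ω → ENNReal := fun ω => ⨆ n, (v n ω : ENNReal) with hgdef
    have hgmeas : Measurable g := Measurable.iSup hvmeas
    have hg𝕋 : ∀ ω, g ω ∈ 𝕋s := by
      intro ω
      have h1 : g ω = sSup (Set.range fun n => (v n ω : ENNReal)) := sSup_range.symm
      rw [h1]
      exact hcl.closure_subset (closure_mono
        (Set.range_subset_iff.mpr fun n => (v n ω).2)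
        (csSup_mem_closure (Set.range_nonempty _) (OrderTop.bddAbove _)))
    set σmax : Ω → 𝕋s := fun ω => ⟨g ω, hg𝕋 ω⟩ with hσdef
    have hM : ∫⁻ ω, stlPsi (g ω) ∂P = sSup A := by
      refine le_antisymm (le_sSup ⟨v, hv, rfl⟩) ?_
      refine le_of_tendsto hatend (Eventually.of_forall fun k => ?_)
      rw [hval k]
      refine lintegral_mono fun ω => stlPsi_strictMono.monotone (iSup_le fun j => ?_)
      refine le_iSup_of_le (Nat.pair k j) ?_
      simp [hvdef, Nat.unpair_pair]
    have hMfin : ∫⁻ ω, stlPsi (g ω) ∂P ≠ ⊤ := by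
      refine ne_top_of_le_ne_top ENNReal.one_ne_top ?_
      calc ∫⁻ ω, stlPsi (g ω) ∂P ≤ ∫⁻ _, 1 ∂P := lintegral_mono fun ω => stlPsi_le_one _
        _ = 1 := by simp
    refine ⟨σmax, ?_, ?_, ?_⟩
    · intro t
      simp only [WithTop.coe_le_coe]
      have heq : {ω | σmax ω ≤ t} = ⋂ n, {ω | v n ω ≤ t} := by
        ext ω
        simp only [Set.mem_setOf_eq, Set.mem_iInter]
        constructor
        · intro h n
          exact Subtype.coe_le_coe.mp
            ((le_iSup (fun n => (v n ω : ENNReal)) n).trans (Subtype.coe_le_coe.mpr h))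
        · intro h
          exact Subtype.coe_le_coe.mp (iSup_le fun n => Subtype.coe_le_coe.mpr (h n))
      rw [heq]
      exact MeasurableSet.iInter fun n => by
        have h := hΦ' _ (hv n) t; simp only [WithTop.coe_le_coe] at h; exact h
    · intro τ hτΦ
      set w : ℕ → Ω → 𝕋s := fun n => Nat.casesOn n τ v with hwdef
      have hw : ∀ n, w n ∈ Φ' := by
        rintro (_ | n)
        · exact Set.mem_insert_of_mem _ hτΦ
        · exact hv n
      set g' : Ω → ENNReal := fun ω => ⨆ n, (w n ω : ENNReal) with hg'def
      have hg'meas : Measurable g' :=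
        Measurable.iSup fun n => stl_coe_measurable hcl F (hΦ' _ (hw n))
      have hg'_eq : ∀ ω, g' ω = (τ ω : ENNReal) ⊔ g ω := by
        intro ω
        refine le_antisymm (iSup_le fun n => ?_) ?_
        · cases n with
          | zero => exact le_sup_left
          | succ n => exact le_sup_of_le_right (le_iSup (fun m => (v m ω : ENNReal)) n)
        · exact sup_le (le_iSup (fun n => (w n ω : ENNReal)) 0)
            (iSup_le fun n => le_iSup (fun m => (w m ω : ENNReal)) (n + 1))
      have h2 : ∀ ω, stlPsi (g ω) ≤ stlPsi (g' ω) := fun ω =>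
        stlPsi_strictMono.monotone (by rw [hg'_eq]; exact le_sup_right)
      have h1 : ∫⁻ ω, stlPsi (g' ω) ∂P ≤ ∫⁻ ω, stlPsi (g ω) ∂P := by
        rw [hM]
        exact le_sSup ⟨w, hw, rfl⟩
      have heq0 : ∫⁻ ω, (stlPsi (g' ω) - stlPsi (g ω)) ∂P = 0 := by
        rw [lintegral_sub (f := fun ω => stlPsi (g' ω)) (g := fun ω => stlPsi (g ω))
          (stlPsi_measurable.comp hgmeas) hMfin (Eventually.of_forall h2)]
        exact tsub_eq_zero_of_le h1
      have hae := (lintegral_eq_zero_iff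
        ((stlPsi_measurable.comp hg'meas).sub (stlPsi_measurable.comp hgmeas))).mp heq0
      filter_upwards [hae] with ω hω
      have hle : stlPsi (g' ω) ≤ stlPsi (g ω) := by
        have : stlPsi (g' ω) - stlPsi (g ω) = 0 := hω
        exact tsub_eq_zero_iff_le.mp this
      have hgg : g' ω = g ω := stlPsi_strictMono.injective (le_antisymm hle (h2 ω))
      have : (τ ω : ENNReal) ≤ g ω := by
        rw [← hgg, hg'_eq]
        exact le_sup_left
      exact Subtype.coe_le_coe.mp this
    · intro Y _ hY
      have h1 : ∀ n, ∀ᵐ ω ∂P, v n ω ≤ Y ω := by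
        intro n
        rcases Set.mem_insert_iff.mp (hv n) with h | h
        · exact Eventually.of_forall fun ω => by rw [h]; exact hbot_le _
        · exact hY _ h
      filter_upwards [ae_all_iff.mpr h1] with ω hω
      exact Subtype.coe_le_coe.mp (iSup_le fun n => Subtype.coe_le_coe.mpr (hω n))
  · -- infimum part
    set Φ' : Set (Ω → 𝕋s) := insert (fun _ => tp) Φ with hΦ'def
    have hΦ' : ∀ τ ∈ Φ', IsStoppingTime F (fun ω => (τ ω : WithTop 𝕋s)) := by
      rintro τ hτ
      rcases Set.mem_insert_iff.mp hτ with rfl | hτ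
      · exact isStoppingTime_const F tp
      · exact hΦ τ hτ
    set A : Set ENNReal := {r | ∃ u : ℕ → Ω → 𝕋s, (∀ n, u n ∈ Φ') ∧
        r = ∫⁻ ω, stlPsi (⨅ n, (u n ω : ENNReal)) ∂P} with hAdef
    have hAne : A.Nonempty :=
      ⟨_, fun _ _ => tp, fun _ => Set.mem_insert _ _, rfl⟩
    obtain ⟨a, hamono, hatend, haA⟩ := exists_seq_tendsto_sInf hAne (OrderBot.bddBelow A)
    choose u hu hval using haA
    set v : ℕ → Ω → 𝕋s := fun n => u (Nat.unpair n).1 (Nat.unpair n).2 with hvdef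
    have hv : ∀ n, v n ∈ Φ' := fun n => hu _ _
    have hvmeas : ∀ n, Measurable fun ω => (v n ω : ENNReal) :=
      fun n => stl_coe_measurable hcl F (hΦ' _ (hv n))
    set g : Ω → ENNReal := fun ω => ⨅ n, (v n ω : ENNReal) with hgdef
    have hgmeas : Measurable g := Measurable.iInf hvmeas
    have hg𝕋 : ∀ ω, g ω ∈ 𝕋s := by
      intro ω
      have h1 : g ω = sInf (Set.range fun n => (v n ω : ENNReal)) := sInf_range.symm
      rw [h1]
      exact hcl.closure_subset (closure_mono
        (Set.range_subset_iff.mpr fun n => (v n ω).2)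
        (csInf_mem_closure (Set.range_nonempty _) (OrderBot.bddBelow _)))
    set σmin : Ω → 𝕋s := fun ω => ⟨g ω, hg𝕋 ω⟩ with hσdef
    have hM : ∫⁻ ω, stlPsi (g ω) ∂P = sInf A := by
      refine le_antisymm ?_ (sInf_le ⟨v, hv, rfl⟩)
      refine ge_of_tendsto hatend (Eventually.of_forall fun k => ?_)
      rw [hval k]
      refine lintegral_mono fun ω => stlPsi_strictMono.monotone (le_iInf fun j => ?_)
      refine iInf_le_of_le (Nat.pair k j) ?_
      simp [hvdef, Nat.unpair_pair]
    refine ⟨σmin, ?_, ?_, ?_⟩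
    · intro t
      simp only [WithTop.coe_le_coe]
      by_cases hex : ∃ s : 𝕋s, t < s
      · rw [hrc t hex]
        refine MeasurableSpace.measurableSet_iInf.mpr fun s => ?_
        obtain ⟨D, hD1, hD2⟩ := stl_exists_gt_seq hcl s.1.2
          (show (t : ENNReal) < (s.1 : ENNReal) from Subtype.coe_lt_coe.mpr s.2)
        have hset : {ω | σmin ω ≤ t} = ⋂ k, {ω | g ω < (D k : ENNReal)} := by
          ext ω
          simp only [Set.mem_setOf_eq, Set.mem_iInter]
          exact hD2 ⟨g ω, hg𝕋 ω⟩
        rw [hset]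
        refine MeasurableSet.iInter fun k => ?_
        have hUeq : {ω | g ω < (D k : ENNReal)} =
            ⋃ n, {ω | (v n ω : ENNReal) < (D k : ENNReal)} := by
          ext ω
          simp only [Set.mem_setOf_eq, Set.mem_iUnion, hgdef]
          exact iInf_lt_iff
        rw [hUeq]
        refine MeasurableSet.iUnion fun n => ?_
        have hst : D k ≤ s.1 := Subtype.coe_le_coe.mp (hD1 k).2
        exact F.mono hst _ (stl_lt_measurable hcl F (hΦ' _ (hv n)) le_rfl)
      · have hset : {ω | σmin ω ≤ t} = Set.univ := by
          ext ω
          simp only [Set.mem_setOf_eq, Set.mem_univ, iff_true]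
          push_neg at hex
          exact (hle_top (σmin ω)).trans (hex tp)
        rw [hset]
        exact @MeasurableSet.univ _ (F t)
    · intro τ hτΦ
      set w : ℕ → Ω → 𝕋s := fun n => Nat.casesOn n τ v with hwdef
      have hw : ∀ n, w n ∈ Φ' := by
        rintro (_ | n)
        · exact Set.mem_insert_of_mem _ hτΦ
        · exact hv n
      set g' : Ω → ENNReal := fun ω => ⨅ n, (w n ω : ENNReal) with hg'def
      have hg'meas : Measurable g' :=
        Measurable.iInf fun n => stl_coe_measurable hcl F (hΦ' _ (hw n))
      have hg'_eq : ∀ ω, g' ω = (τ ω : ENNReal) ⊓ g ω := by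
        intro ω
        refine le_antisymm ?_ (le_iInf fun n => ?_)
        · exact le_inf (iInf_le (fun n => (w n ω : ENNReal)) 0)
            (le_iInf fun n => iInf_le (fun m => (w m ω : ENNReal)) (n + 1))
        · cases n with
          | zero => exact inf_le_left
          | succ n => exact inf_le_of_right_le (iInf_le (fun m => (v m ω : ENNReal)) n)
      have h2 : ∀ ω, stlPsi (g' ω) ≤ stlPsi (g ω) := fun ω =>
        stlPsi_strictMono.monotone (by rw [hg'_eq]; exact inf_le_right)
      have h1 : ∫⁻ ω, stlPsi (g ω) ∂P ≤ ∫⁻ ω, stlPsi (g' ω) ∂P := by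
        rw [hM]
        exact sInf_le ⟨w, hw, rfl⟩
      have hfin' : ∫⁻ ω, stlPsi (g' ω) ∂P ≠ ⊤ := by
        refine ne_top_of_le_ne_top ENNReal.one_ne_top ?_
        calc ∫⁻ ω, stlPsi (g' ω) ∂P ≤ ∫⁻ _, 1 ∂P := lintegral_mono fun ω => stlPsi_le_one _
          _ = 1 := by simp
      have heq0 : ∫⁻ ω, (stlPsi (g ω) - stlPsi (g' ω)) ∂P = 0 := by
        rw [lintegral_sub (f := fun ω => stlPsi (g ω)) (g := fun ω => stlPsi (g' ω))
          (stlPsi_measurable.comp hg'meas) hfin' (Eventually.of_forall h2)]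
        exact tsub_eq_zero_of_le h1
      have hae := (lintegral_eq_zero_iff
        ((stlPsi_measurable.comp hgmeas).sub (stlPsi_measurable.comp hg'meas))).mp heq0
      filter_upwards [hae] with ω hω
      have hle : stlPsi (g ω) ≤ stlPsi (g' ω) := by
        have : stlPsi (g ω) - stlPsi (g' ω) = 0 := hω
        exact tsub_eq_zero_iff_le.mp this
      have hgg : g ω = g' ω := stlPsi_strictMono.injective (le_antisymm hle (h2 ω))
      have : g ω ≤ (τ ω : ENNReal) := by
        rw [hgg, hg'_eq]
        exact inf_le_left
      exact Subtype.coe_le_coe.mp this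
    · intro Y _ hY
      have h1 : ∀ n, ∀ᵐ ω ∂P, Y ω ≤ v n ω := by
        intro n
        rcases Set.mem_insert_iff.mp (hv n) with h | h
        · exact Eventually.of_forall fun ω => by rw [h]; exact hle_top _
        · exact hY _ h
      filter_upwards [ae_all_iff.mpr h1] with ω hω
      exact Subtype.coe_le_coe.mp (le_iInf fun n => Subtype.coe_le_coe.mpr (hω n))
end

section
/- Let E and E' be Polish spaces, and let P_n, P be Borel probability measures on E × E' with P_n → P weakly, such that every P_n has the same E-marginal, i.e. P_n(· × E') does not depend on n; call this common marginal μ. Then for every bounded measurable function φ : E × E' → ℝ such that φ(x,·) is continuous on E' for μ-almost every x ∈ E, one has ∫ φ dP_n → ∫ φ dP. -/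
open MeasureTheory Filter Topology

open Metric Set
open scoped ENNReal NNReal BoundedContinuousFunction

/-- A map into `C(K, ℝ)` (`K` compact metric) which is measurable after evaluation at every
point is strongly measurable. -/
lemma stronglyMeasurable_toCM {α K : Type*} [MeasurableSpace α] [MetricSpace K] [CompactSpace K]
    [SecondCountableTopology K] (f : α → C(K, ℝ)) (h : ∀ y, Measurable fun x => f x y) :
    StronglyMeasurable f := by
  borelize C(K, ℝ)
  refine Measurable.stronglyMeasurable ?_
  rcases isEmpty_or_nonempty K with hK | hK
  · haveI : Subsingleton C(K, ℝ) := ⟨fun a b => ContinuousMap.ext fun y => isEmptyElim y⟩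
    exact measurable_of_subsingleton_codomain f
  -- closed balls
  have h_cb : ∀ (g : C(K, ℝ)) (r : ℝ), MeasurableSet (f ⁻¹' Metric.closedBall g r) := by
    intro g r
    rcases lt_or_ge r 0 with hr | hr
    · rw [Metric.closedBall_eq_empty.2 hr]; simp
    · set d := TopologicalSpace.denseSeq K with hd_def
      have hd : DenseRange d := TopologicalSpace.denseRange_denseSeq K
      have : f ⁻¹' Metric.closedBall g r = ⋂ n, {x | dist (f x (d n)) (g (d n)) ≤ r} := by
        ext x
        simp only [mem_preimage, Metric.mem_closedBall, mem_iInter, mem_setOf_eq]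
        rw [ContinuousMap.dist_le hr]
        constructor
        · exact fun H n => H (d n)
        · intro H y
          have hcl : IsClosed {y : K | dist (f x y) (g y) ≤ r} :=
            isClosed_le (by fun_prop) continuous_const
          have hsub : (Set.univ : Set K) ⊆ {y : K | dist (f x y) (g y) ≤ r} := by
            rw [← hd.closure_eq]
            exact hcl.closure_subset_iff.2 (by rintro _ ⟨n, rfl⟩; exact H n)
          exact hsub (mem_univ y)
      rw [this]
      exact MeasurableSet.iInter fun n =>
        measurableSet_le ((h (d n)).dist measurable_const) measurable_const
  -- open balls
  have h_b : ∀ (g : C(K, ℝ)) (r : ℝ), MeasurableSet (f ⁻¹' Metric.ball g r) := by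
    intro g r
    have hball : Metric.ball g r = ⋃ (q : ℚ) (_ : (q : ℝ) < r), Metric.closedBall g q := by
      ext u
      simp only [Metric.mem_ball, mem_iUnion, Metric.mem_closedBall]
      constructor
      · intro hu
        obtain ⟨q, hq1, hq2⟩ := exists_rat_btwn hu
        exact ⟨q, hq2, le_of_lt hq1⟩
      · rintro ⟨q, hq, hu⟩; exact lt_of_le_of_lt hu hq
    rw [hball]
    rw [preimage_iUnion]
    refine MeasurableSet.iUnion fun q => ?_
    rw [preimage_iUnion]
    exact MeasurableSet.iUnion fun _ => h_cb g q
  -- open sets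
  refine measurable_of_isOpen fun U hU => ?_
  obtain ⟨T, T_count, T_dense⟩ := TopologicalSpace.exists_countable_dense C(K, ℝ)
  have hUeq : U = ⋃ (g : T) (q : ℚ) (_ : 0 < (q : ℝ) ∧ Metric.ball (g : C(K, ℝ)) q ⊆ U),
      Metric.ball (g : C(K, ℝ)) q := by
    apply Subset.antisymm
    · intro u hu
      obtain ⟨ε, hε, hballU⟩ := Metric.isOpen_iff.1 hU u hu
      obtain ⟨g, hgT, hg⟩ := T_dense.exists_dist_lt u (by positivity : (0:ℝ) < ε / 3)
      have hdg : dist u g < ε / 3 := hg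
      obtain ⟨q, hq1, hq2⟩ : ∃ q : ℚ, dist u g < q ∧ (q : ℝ) < ε / 2 :=
        exists_rat_btwn (lt_of_lt_of_le hdg (by linarith))
      have hqpos : 0 < (q : ℝ) := lt_of_le_of_lt dist_nonneg hq1
      have hsubU : Metric.ball (g : C(K, ℝ)) q ⊆ U := by
        intro y hy
        apply hballU
        rw [Metric.mem_ball] at hy ⊢
        have h1 : dist g u < ε / 3 := by rw [dist_comm]; exact hdg
        calc dist y u ≤ dist y g + dist g u := dist_triangle _ _ _
          _ < q + ε / 3 := add_lt_add hy h1
          _ < ε / 2 + ε / 2 := by linarith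
          _ = ε := by ring
      refine mem_iUnion.2 ⟨⟨g, hgT⟩, mem_iUnion.2 ⟨q, mem_iUnion.2 ⟨⟨hqpos, hsubU⟩, ?_⟩⟩⟩
      exact Metric.mem_ball.2 (by show dist u g < (q:ℝ); exact hq1)
    · intro u hu
      simp only [mem_iUnion] at hu
      obtain ⟨g, q, ⟨_, hsub⟩, hu⟩ := hu
      exact hsub hu
  rw [hUeq]
  haveI : Countable T := T_count.to_subtype
  rw [preimage_iUnion]
  refine MeasurableSet.iUnion fun g => ?_
  rw [preimage_iUnion]
  refine MeasurableSet.iUnion fun q => ?_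
  rw [preimage_iUnion]
  exact MeasurableSet.iUnion fun _ => h_b g q

lemma lusin_continuousOn {α X : Type*} [TopologicalSpace α] [PolishSpace α] [MeasurableSpace α]
    [BorelSpace α] (μ : Measure α) [IsFiniteMeasure μ] [NormedAddCommGroup X] [NormedSpace ℝ X]
    [SecondCountableTopology X] {f : α → X} (hf : StronglyMeasurable f) (hmem : MemLp f 1 μ)
    {δ : ℝ} (hδ : 0 < δ) :
    ∃ A : Set α, IsClosed A ∧ μ Aᶜ ≤ ENNReal.ofReal δ ∧ ContinuousOn f A := by
  letI := TopologicalSpace.metrizableSpaceMetric α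
  have hg : ∀ k : ℕ, ∃ g : α →ᵇ X, eLpNorm (f - (g : α → X)) 1 μ ≤ ((k : ℝ≥0∞) + 1)⁻¹ := by
    intro k
    obtain ⟨g, hg1, _⟩ := hmem.exists_boundedContinuous_eLpNorm_sub_le (ENNReal.one_ne_top)
      (show ((k : ℝ≥0∞) + 1)⁻¹ ≠ 0 by simp [ENNReal.inv_ne_zero])
    exact ⟨g, hg1⟩
  choose g hgle using hg
  have htends : Tendsto (fun k => eLpNorm ((g k : α → X) - f) 1 μ) atTop (𝓝 0) := by
    have h1 : Tendsto (fun k : ℕ => ((k : ℝ≥0∞) + 1)⁻¹) atTop (𝓝 0) := by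
      have := ENNReal.tendsto_inv_nat_nhds_zero.comp (tendsto_add_atTop_nat 1)
      refine this.congr fun k => ?_
      simp only [Function.comp]
      push_cast
      ring_nf
    refine tendsto_of_tendsto_of_tendsto_of_le_of_le tendsto_const_nhds h1
      (fun k => zero_le) (fun k => ?_)
    rw [eLpNorm_sub_comm]
    exact hgle k
  have hmeas_g : ∀ k : ℕ, AEStronglyMeasurable (g k : α → X) μ :=
    fun k => (g k).continuous.stronglyMeasurable.aestronglyMeasurable
  have htim : TendstoInMeasure μ (fun k => (g k : α → X)) atTop f :=
    tendstoInMeasure_of_tendsto_eLpNorm_of_ne_top one_ne_zero ENNReal.one_ne_top hmeas_g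
      hf.aestronglyMeasurable htends
  obtain ⟨ns, -, hae⟩ := htim.exists_seq_tendsto_ae
  obtain ⟨t, ht_meas, ht_le, hunif⟩ := tendstoUniformlyOn_of_ae_tendsto'
    (fun i => (g (ns i)).continuous.stronglyMeasurable) hf hae (half_pos hδ)
  have hconts : ContinuousOn f tᶜ :=
    hunif.continuousOn (Eventually.of_forall fun i => (g (ns i)).continuous.continuousOn).frequently
  obtain ⟨A, hAsub, hAclosed, hlt⟩ := ht_meas.compl.exists_isClosed_lt_add
    (measure_ne_top μ _) (show ENNReal.ofReal (δ/2) ≠ 0 by simp [hδ.le, half_pos hδ])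
  refine ⟨A, hAclosed, ?_, hconts.mono hAsub⟩
  have hsub : Aᶜ ⊆ t ∪ (tᶜ \ A) := by
    intro z hz
    by_cases hzt : z ∈ t
    · exact Or.inl hzt
    · exact Or.inr ⟨hzt, hz⟩
  have h2 : μ (tᶜ \ A) ≤ ENNReal.ofReal (δ/2) := by
    rw [measure_diff hAsub hAclosed.measurableSet.nullMeasurableSet (measure_ne_top μ A)]
    rw [tsub_le_iff_right, add_comm]
    exact hlt.le
  calc μ Aᶜ ≤ μ (t ∪ (tᶜ \ A)) := measure_mono hsub
    _ ≤ μ t + μ (tᶜ \ A) := measure_union_le _ _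
    _ ≤ ENNReal.ofReal (δ/2) + ENNReal.ofReal (δ/2) := add_le_add ht_le h2
    _ = ENNReal.ofReal δ := by
        rw [← ENNReal.ofReal_add (by positivity) (by positivity)]
        norm_num

/-- A weakly convergent sequence of probability measures on a complete separable metric
space, together with its limit, is uniformly tight. -/
lemma tight_of_tendsto {Ω : Type*} [MetricSpace Ω] [CompleteSpace Ω] [SecondCountableTopology Ω]
    [MeasurableSpace Ω] [BorelSpace Ω]
    (νs : ℕ → ProbabilityMeasure Ω) (ν : ProbabilityMeasure Ω)
    (hconv : Tendsto νs atTop (𝓝 ν)) {δ : ℝ≥0∞} (hδ : 0 < δ) :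
    ∃ K : Set Ω, IsCompact K ∧ (∀ n, (νs n : Measure Ω) Kᶜ ≤ δ) ∧ (ν : Measure Ω) Kᶜ ≤ δ := by
  rcases eq_or_ne δ ∞ with rfl | hδtop
  · exact ⟨∅, isCompact_empty, fun n => le_top, le_top⟩
  rcases isEmpty_or_nonempty Ω with hΩ | hΩ
  · exfalso
    have h1 : (ν : Measure Ω) univ = 1 := measure_univ
    rw [show (univ : Set Ω) = ∅ from Set.univ_eq_empty_iff.2 hΩ, measure_empty] at h1
    exact zero_ne_one h1
  set d : ℕ → Ω := TopologicalSpace.denseSeq Ω with hd_def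
  have hd : DenseRange d := TopologicalSpace.denseRange_denseSeq Ω
  -- the basic open sets
  set U : ℝ → ℕ → Set Ω := fun r m => ⋃ (i : ℕ) (_ : i ≤ m), ball (d i) r with hU_def
  have hU_open : ∀ r m, IsOpen (U r m) := fun r m =>
    isOpen_biUnion fun i _ => isOpen_ball
  have hU_mono : ∀ r, Monotone (U r) := by
    intro r m m' hmm z hz
    simp only [hU_def, mem_iUnion] at hz ⊢
    obtain ⟨i, hi, h⟩ := hz
    exact ⟨i, hi.trans hmm, h⟩
  have hU_univ : ∀ r, 0 < r → ⋃ m, U r m = univ := by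
    intro r hr
    refine eq_univ_of_forall fun z => ?_
    obtain ⟨i, hi⟩ := hd.exists_dist_lt z hr
    exact mem_iUnion.2 ⟨i, mem_iUnion₂.2 ⟨i, le_refl i, mem_ball.2 hi⟩⟩
  -- single measure: the mass escapes to the whole space
  have hsingle : ∀ (Q : ProbabilityMeasure Ω) (r : ℝ), 0 < r →
      Tendsto (fun m => (Q : Measure Ω) (U r m)ᶜ) atTop (𝓝 0) := by
    intro Q r hr
    have h0 : (⋂ m, (U r m)ᶜ) = ∅ := by
      rw [← compl_iUnion, hU_univ r hr, compl_univ]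
    have := tendsto_measure_iInter_atTop (μ := (Q : Measure Ω)) (s := fun m => (U r m)ᶜ)
      (fun m => ((hU_open r m).isClosed_compl.measurableSet).nullMeasurableSet)
      (fun m m' hmm => compl_subset_compl.2 (hU_mono r hmm))
      ⟨0, measure_ne_top _ _⟩
    rw [h0, measure_empty] at this
    exact this
  -- uniformly in `n`, for one scale `r`
  have hscale : ∀ (r : ℝ), 0 < r → ∀ (ε : ℝ≥0∞), 0 < ε →
      ∃ m : ℕ, (∀ n, (νs n : Measure Ω) (U r m)ᶜ < ε) ∧ (ν : Measure Ω) (U r m)ᶜ < ε := by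
    intro r hr ε hε
    obtain ⟨m₁, hm₁⟩ := ((hsingle ν r hr).eventually (gt_mem_nhds hε)).exists
    have hlimsup : atTop.limsup (fun n => (νs n : Measure Ω) (U r m₁)ᶜ) ≤
        (ν : Measure Ω) (U r m₁)ᶜ :=
      ProbabilityMeasure.limsup_measure_closed_le_of_tendsto hconv (hU_open r m₁).isClosed_compl
    have hev : ∀ᶠ n in atTop, (νs n : Measure Ω) (U r m₁)ᶜ < ε :=
      eventually_lt_of_limsup_lt (lt_of_le_of_lt hlimsup hm₁)
    obtain ⟨N, hN⟩ := eventually_atTop.1 hev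
    -- each small `n` separately
    have hsmall : ∀ n, ∃ Mn : ℕ, ∀ m ≥ Mn, (νs n : Measure Ω) (U r m)ᶜ < ε := fun n =>
      eventually_atTop.1 ((hsingle (νs n) r hr).eventually (gt_mem_nhds hε))
    choose Mn hMn using hsmall
    set M := max m₁ ((Finset.range N).sup Mn) with hM_def
    refine ⟨M, fun n => ?_, ?_⟩
    · rcases lt_or_ge n N with hn | hn
      · exact hMn n M ((Finset.le_sup (Finset.mem_range.2 hn)).trans (le_max_right _ _))
      · exact lt_of_le_of_lt
          (measure_mono (compl_subset_compl.2 (hU_mono r (le_max_left _ _)))) (hN n hn)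
    · exact lt_of_le_of_lt
        (measure_mono (compl_subset_compl.2 (hU_mono r (le_max_left _ _)))) hm₁
  -- apply at scales 1/(k+1) with budget δ/2 * 2⁻ᵏ
  set rr : ℕ → ℝ := fun k => 1 / ((k : ℝ) + 1) with hrr_def
  have hεpos : ∀ k : ℕ, (0 : ℝ≥0∞) < δ / 2 * 2⁻¹ ^ k := by
    intro k
    apply ENNReal.mul_pos
    · exact (ENNReal.div_pos hδ.ne' ENNReal.ofNat_ne_top).ne'
    · exact (ENNReal.pow_pos (ENNReal.inv_pos.2 ENNReal.ofNat_ne_top) k).ne'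
  have hrpos : ∀ k : ℕ, (0 : ℝ) < rr k := fun k => by positivity
  have key : ∀ k : ℕ, ∃ m : ℕ,
      (∀ n, (νs n : Measure Ω) (U (rr k) m)ᶜ < δ / 2 * 2⁻¹ ^ k) ∧
      (ν : Measure Ω) (U (rr k) m)ᶜ < δ / 2 * 2⁻¹ ^ k :=
    fun k => hscale _ (hrpos k) _ (hεpos k)
  choose m hm1 hm2 using key
  set K : Set Ω := ⋂ k, closure (U (rr k) (m k)) with hK_def
  have hKcomp : IsCompact K := by
    refine TotallyBounded.isCompact_of_isClosed ?_ (isClosed_iInter fun k => isClosed_closure)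
    rw [Metric.totallyBounded_iff]
    intro ε hε
    obtain ⟨k, hk⟩ := exists_nat_one_div_lt hε
    refine ⟨d '' {i | i ≤ m k}, (Set.finite_Iic (m k)).image d, ?_⟩
    have hsub1 : K ⊆ closure (U (rr k) (m k)) := iInter_subset _ k
    have hsub2 : closure (U (rr k) (m k)) ⊆
        ⋃ (i : ℕ) (_ : i ≤ m k), closedBall (d i) (rr k) := by
      apply closure_minimal
      · exact iUnion₂_mono fun i _ => ball_subset_closedBall
      · exact (Set.finite_Iic (m k)).isClosed_biUnion fun i _ => isClosed_closedBall
    intro z hz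
    obtain ⟨i, hi, hzi⟩ := mem_iUnion₂.1 (hsub2 (hsub1 hz))
    refine mem_iUnion₂.2 ⟨d i, ⟨i, hi, rfl⟩, ?_⟩
    exact lt_of_le_of_lt hzi hk
  have hbound : ∀ (Q : Measure Ω),
      (∀ k, Q (U (rr k) (m k))ᶜ ≤ δ / 2 * 2⁻¹ ^ k) → Q Kᶜ ≤ δ := by
    intro Q hQ
    have h1 : Q Kᶜ ≤ ∑' k, Q (closure (U (rr k) (m k)))ᶜ := by
      rw [hK_def, compl_iInter]
      exact measure_iUnion_le _
    have h2 : ∀ k, Q (closure (U (rr k) (m k)))ᶜ ≤ δ / 2 * 2⁻¹ ^ k := fun k =>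
      le_trans (measure_mono (compl_subset_compl.2 subset_closure)) (hQ k)
    calc Q Kᶜ ≤ ∑' k, Q (closure (U (rr k) (m k)))ᶜ := h1
      _ ≤ ∑' k : ℕ, δ / 2 * 2⁻¹ ^ k := ENNReal.tsum_le_tsum h2
      _ = δ / 2 * ∑' k : ℕ, 2⁻¹ ^ k := ENNReal.tsum_mul_left
      _ = δ / 2 * 2 := by rw [ENNReal.tsum_geometric, ENNReal.one_sub_inv_two, inv_inv]
      _ = δ := ENNReal.div_mul_cancel (by norm_num) ENNReal.ofNat_ne_top
  exact ⟨K, hKcomp, fun n => hbound _ (fun k => (hm1 k n).le), hbound _ (fun k => (hm2 k).le)⟩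

/-- **Lemma (Jacod–Mémin).** If `Pₙ → P` weakly on a product of Polish spaces `E × E'`, all the
`Pₙ` having the same `E`-marginal `μ`, then `∫ φ dPₙ → ∫ φ dP` for every bounded measurable
`φ : E × E' → ℝ` such that `φ (x, ·)` is continuous for `μ`-a.e. `x`. -/
theorem stmt_15
    {E E' : Type*}
    [TopologicalSpace E] [PolishSpace E] [MeasurableSpace E] [BorelSpace E]
    [TopologicalSpace E'] [PolishSpace E'] [MeasurableSpace E'] [BorelSpace E']
    (Pn : ℕ → ProbabilityMeasure (E × E')) (P : ProbabilityMeasure (E × E'))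
    (μ : Measure E)
    (hmarg : ∀ n, (Pn n : Measure (E × E')).map Prod.fst = μ)
    (hconv : Tendsto Pn atTop (𝓝 P))
    (φ : E × E' → ℝ) (hφmeas : Measurable φ) (hφbdd : ∃ C, ∀ z, |φ z| ≤ C)
    (hφcont : ∀ᵐ x ∂μ, Continuous fun y => φ (x, y)) :
    Tendsto (fun n => ∫ z, φ z ∂(Pn n : Measure (E × E'))) atTop
      (𝓝 (∫ z, φ z ∂(P : Measure (E × E')))) := by
  classical
  obtain ⟨C₀, hC₀⟩ := hφbdd
  set C : ℝ := max C₀ 1 with hC_def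
  have hC1 : (1:ℝ) ≤ C := le_max_right _ _
  have hCpos : (0:ℝ) < C := lt_of_lt_of_le one_pos hC1
  have hφC : ∀ z, |φ z| ≤ C := fun z => (hC₀ z).trans (le_max_left _ _)
  -- μ is a probability measure
  have hμprob : IsProbabilityMeasure μ := by
    rw [← hmarg 0]
    exact Measure.isProbabilityMeasure_map measurable_fst.aemeasurable
  haveI := hμprob
  -- the marginal of P is also μ
  have hPmarg : (P : Measure (E × E')).map Prod.fst = μ := by
    have h1 : Tendsto (fun n => (Pn n).map continuous_fst.measurable.aemeasurable) atTop
        (𝓝 (P.map continuous_fst.measurable.aemeasurable)) :=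
      ProbabilityMeasure.tendsto_map_of_tendsto_of_continuous Pn P hconv continuous_fst
    have h2 : (fun n => (Pn n).map continuous_fst.measurable.aemeasurable) =
        fun _ => (⟨μ, hμprob⟩ : ProbabilityMeasure E) := by
      funext n
      exact Subtype.ext (by simpa using hmarg n)
    rw [h2] at h1
    have h3 := tendsto_nhds_unique h1 tendsto_const_nhds
    have := congrArg (fun Q : ProbabilityMeasure E => (Q : Measure E)) h3
    simpa using this
  -- upgrade E' to a complete separable metric space
  letI := TopologicalSpace.upgradeIsCompletelyMetrizable E'
  -- marginals on E'
  set ν : ProbabilityMeasure E' := P.map continuous_snd.measurable.aemeasurable with hν_def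
  set νs : ℕ → ProbabilityMeasure E' :=
    fun n => (Pn n).map continuous_snd.measurable.aemeasurable with hνs_def
  have hνconv : Tendsto νs atTop (𝓝 ν) :=
    ProbabilityMeasure.tendsto_map_of_tendsto_of_continuous Pn P hconv continuous_snd
  -- final reduction to an ε-argument
  rw [Metric.tendsto_atTop]
  intro ε hε
  set η : ℝ := ε / 4 with hη_def
  have hηpos : 0 < η := by positivity
  set δ : ℝ := η / (6 * C) with hδ_def
  have hδpos : 0 < δ := by positivity
  set δ' : ℝ≥0∞ := ENNReal.ofReal δ with hδ'_def
  have hδ'pos : 0 < δ' := ENNReal.ofReal_pos.2 hδpos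
  -- tightness: compact K₂ in E'
  obtain ⟨K₂, hK₂comp, hK₂n, hK₂P⟩ := tight_of_tendsto νs ν hνconv hδ'pos
  have hK₂meas : MeasurableSet K₂ᶜ := hK₂comp.isClosed.measurableSet.compl
  have hsndn : ∀ n, (Pn n : Measure (E × E')) (Prod.snd ⁻¹' K₂ᶜ) ≤ δ' := by
    intro n
    have := hK₂n n
    rwa [hνs_def, ProbabilityMeasure.toMeasure_map, Measure.map_apply measurable_snd hK₂meas]
      at this
  have hsndP : (P : Measure (E × E')) (Prod.snd ⁻¹' K₂ᶜ) ≤ δ' := by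
    rwa [hν_def, ProbabilityMeasure.toMeasure_map, Measure.map_apply measurable_snd hK₂meas]
      at hK₂P
  -- the null set of discontinuity
  obtain ⟨N, hSN, hNmeas, hNnull⟩ :=
    exists_measurable_superset_of_null (ae_iff.1 hφcont)
  have hNcont : ∀ x, x ∉ N → Continuous fun y => φ (x, y) := by
    intro x hx
    by_contra hc
    exact hx (hSN hc)
  -- the Carathéodory function as a map into C(K₂, ℝ)
  haveI : CompactSpace ↥K₂ := isCompact_iff_compactSpace.1 hK₂comp
  set f : E → C(↥K₂, ℝ) := fun x =>
    if hx : x ∈ N then 0 else ⟨fun y => φ (x, (y : E')), (hNcont x hx).comp continuous_subtype_val⟩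
    with hf_def
  have hf_eval : ∀ y : ↥K₂, Measurable fun x => f x y := by
    intro y
    have : (fun x => f x y) = fun x => if x ∈ N then 0 else φ (x, (y : E')) := by
      funext x
      by_cases hx : x ∈ N <;> simp [hf_def, hx]
    rw [this]
    exact Measurable.ite hNmeas measurable_const
      (hφmeas.comp (measurable_id.prodMk measurable_const))
  have hf_sm : StronglyMeasurable f := stronglyMeasurable_toCM f hf_eval
  have hf_norm : ∀ x, ‖f x‖ ≤ C := by
    intro x
    by_cases hx : x ∈ N
    · simp [hf_def, hx, hCpos.le]
    · rw [hf_def]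
      simp only [hx, dif_neg, not_false_iff]
      rw [ContinuousMap.norm_le _ hCpos.le]
      intro y
      simpa [Real.norm_eq_abs] using hφC (x, (y : E'))
  have hf_mem : MemLp f 1 μ :=
    (memLp_top_of_bound hf_sm.aestronglyMeasurable C (ae_of_all _ hf_norm)).mono_exponent
      le_top
  -- Lusin: a closed set where f is continuous
  obtain ⟨A, hAclosed, hAsmall, hAcont⟩ := lusin_continuousOn μ hf_sm hf_mem hδpos
  -- Tietze
  set S : Set (E × E') := A ×ˢ K₂ with hS_def
  have hSclosed : IsClosed S := hAclosed.prod hK₂comp.isClosed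
  have hfA : Continuous (A.restrict f) := continuousOn_iff_continuous_restrict.1 hAcont
  have hcontF : Continuous fun p : ↥S => (A.restrict f ⟨p.1.1, p.2.1⟩) ⟨p.1.2, p.2.2⟩ := by
    have h1 : Continuous fun p : ↥S => (⟨p.1.1, p.2.1⟩ : ↥A) :=
      Continuous.subtype_mk (continuous_fst.comp continuous_subtype_val) _
    have h2 : Continuous fun p : ↥S => (⟨p.1.2, p.2.2⟩ : ↥K₂) :=
      Continuous.subtype_mk (continuous_snd.comp continuous_subtype_val) _
    have h3 : Continuous fun p : ↥S => ((A.restrict f ⟨p.1.1, p.2.1⟩ : C(↥K₂, ℝ)),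
        (⟨p.1.2, p.2.2⟩ : ↥K₂)) := (hfA.comp h1).prodMk h2
    exact continuous_eval.comp h3
  set F₀ : C(↥S, ℝ) := ⟨fun p => (A.restrict f ⟨p.1.1, p.2.1⟩) ⟨p.1.2, p.2.2⟩, hcontF⟩
    with hF₀_def
  letI := TopologicalSpace.upgradeIsCompletelyMetrizable (E × E')
  obtain ⟨Ψ, hΨ⟩ := F₀.exists_restrict_eq hSclosed
  set ψ : E × E' → ℝ := fun z => max (-C) (min C (Ψ z)) with hψ_def
  have hψcont : Continuous ψ := continuous_const.max (continuous_const.min Ψ.continuous)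
  have hψC : ∀ z, |ψ z| ≤ C := by
    intro z
    rw [abs_le]
    constructor
    · exact neg_le_of_neg_le (by simpa using neg_le_of_neg_le (le_max_left _ _))
    · exact max_le (by linarith) (min_le_left _ _)
  have hψeq : ∀ z : E × E', z ∈ S → z.1 ∉ N → ψ z = φ z := by
    intro z hz hzN
    have h1 : Ψ z = F₀ ⟨z, hz⟩ := by
      have := ContinuousMap.congr_fun hΨ ⟨z, hz⟩
      simpa using this
    have h2 : F₀ ⟨z, hz⟩ = φ z := by
      rw [hF₀_def]
      simp only [ContinuousMap.coe_mk]
      show (A.restrict f ⟨z.1, hz.1⟩) ⟨z.2, hz.2⟩ = φ z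
      have : f z.1 = ⟨fun y => φ (z.1, (y : E')),
          (hNcont z.1 hzN).comp continuous_subtype_val⟩ := by
        rw [hf_def]; exact dif_neg hzN
      show (f z.1) ⟨z.2, hz.2⟩ = φ z
      rw [this]
      simp
    rw [hψ_def]
    simp only
    rw [h1, h2]
    have h3 := abs_le.1 (hφC z)
    rw [min_eq_right h3.2, max_eq_right h3.1]
  -- weak convergence of integrals of ψ
  set ψb : (E × E') →ᵇ ℝ :=
    BoundedContinuousFunction.ofNormedAddCommGroup ψ hψcont C
      (fun z => by simpa [Real.norm_eq_abs] using hψC z) with hψb_def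
  have hψtend : Tendsto (fun n => ∫ z, ψ z ∂(Pn n : Measure (E × E'))) atTop
      (𝓝 (∫ z, ψ z ∂(P : Measure (E × E')))) := by
    have := ProbabilityMeasure.tendsto_iff_forall_integral_tendsto.1 hconv ψb
    simpa [hψb_def] using this
  -- the key estimate for any probability measure with the right marginals
  set bad : Set (E × E') := Sᶜ ∪ (Prod.fst ⁻¹' N) with hbad_def
  have hbad_meas : MeasurableSet bad :=
    (hSclosed.measurableSet.compl).union (hNmeas.preimage measurable_fst)
  have key : ∀ Q : Measure (E × E'), IsProbabilityMeasure Q →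
      Q.map Prod.fst = μ → Q (Prod.snd ⁻¹' K₂ᶜ) ≤ δ' →
      |∫ z, φ z ∂Q - ∫ z, ψ z ∂Q| ≤ η := by
    intro Q hQprob hQfst hQsnd
    haveI := hQprob
    have hφint : Integrable φ Q :=
      ⟨hφmeas.aestronglyMeasurable,
        HasFiniteIntegral.of_bounded (C := C)
          (ae_of_all _ fun z => by simpa [Real.norm_eq_abs] using hφC z)⟩
    have hψint : Integrable ψ Q :=
      ⟨hψcont.aestronglyMeasurable,
        HasFiniteIntegral.of_bounded (C := C)
          (ae_of_all _ fun z => by simpa [Real.norm_eq_abs] using hψC z)⟩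
    have hptw : ∀ z, |φ z - ψ z| ≤ bad.indicator (fun _ => 2 * C) z := by
      intro z
      by_cases hz : z ∈ bad
      · rw [indicator_of_mem hz]
        calc |φ z - ψ z| ≤ |φ z| + |ψ z| := abs_sub _ _
          _ ≤ C + C := add_le_add (hφC z) (hψC z)
          _ = 2 * C := by ring
      · rw [indicator_of_notMem hz]
        simp only [hbad_def, mem_union, not_or, mem_preimage, mem_compl_iff, not_not] at hz
        rw [hψeq z hz.1 hz.2, sub_self, abs_zero]
    have hQbad : Q bad ≤ 2 * δ' := by
      have hsub : bad ⊆ (Prod.fst ⁻¹' Aᶜ) ∪ (Prod.snd ⁻¹' K₂ᶜ) ∪ (Prod.fst ⁻¹' N) := by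
        intro z hz
        rcases hz with hz | hz
        · rw [mem_compl_iff, hS_def, mem_prod, not_and_or] at hz
          rcases hz with hz | hz
          · exact Or.inl (Or.inl hz)
          · exact Or.inl (Or.inr hz)
        · exact Or.inr hz
      have hQA : Q (Prod.fst ⁻¹' Aᶜ) ≤ δ' := by
        rw [← Measure.map_apply measurable_fst hAclosed.measurableSet.compl, hQfst]
        exact hAsmall
      have hQN : Q (Prod.fst ⁻¹' N) = 0 := by
        rw [← Measure.map_apply measurable_fst hNmeas, hQfst]
        exact hNnull
      calc Q bad ≤ Q ((Prod.fst ⁻¹' Aᶜ) ∪ (Prod.snd ⁻¹' K₂ᶜ) ∪ (Prod.fst ⁻¹' N)) :=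
            measure_mono hsub
        _ ≤ Q ((Prod.fst ⁻¹' Aᶜ) ∪ (Prod.snd ⁻¹' K₂ᶜ)) + Q (Prod.fst ⁻¹' N) :=
            measure_union_le _ _
        _ ≤ (Q (Prod.fst ⁻¹' Aᶜ) + Q (Prod.snd ⁻¹' K₂ᶜ)) + Q (Prod.fst ⁻¹' N) :=
            add_le_add_left (measure_union_le _ _) _
        _ ≤ (δ' + δ') + 0 := by
            refine add_le_add (add_le_add hQA hQsnd) (le_of_eq hQN)
        _ = 2 * δ' := by ring
    have hint : |∫ z, φ z ∂Q - ∫ z, ψ z ∂Q| ≤ (Q bad).toReal * (2 * C) := by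
      rw [← integral_sub hφint hψint]
      calc |∫ z, (φ z - ψ z) ∂Q| ≤ ∫ z, |φ z - ψ z| ∂Q := by
            simpa [Real.norm_eq_abs] using norm_integral_le_integral_norm (fun z => φ z - ψ z) (μ := Q)
        _ ≤ ∫ z, bad.indicator (fun _ => 2 * C) z ∂Q := by
            refine integral_mono (hφint.sub hψint).abs ?_ hptw
            exact (integrable_indicator_iff hbad_meas).2 integrableOn_const
        _ = (Q bad).toReal * (2 * C) := by
            rw [integral_indicator_const _ hbad_meas]
            simp [smul_eq_mul, mul_comm, measureReal_def]
    have htoReal : (Q bad).toReal ≤ 2 * δ := by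
      have h2δ : ((2 : ℝ≥0∞) * δ').toReal = 2 * δ := by
        rw [ENNReal.toReal_mul, hδ'_def, ENNReal.toReal_ofReal hδpos.le]
        norm_num
      rw [← h2δ]
      exact ENNReal.toReal_mono (by
        refine ENNReal.mul_ne_top (by norm_num) ?_
        simp [hδ'_def]) hQbad
    calc |∫ z, φ z ∂Q - ∫ z, ψ z ∂Q| ≤ (Q bad).toReal * (2 * C) := hint
      _ ≤ (2 * δ) * (2 * C) := by
          refine mul_le_mul_of_nonneg_right htoReal (by positivity)
      _ = 4 * C * δ := by ring
      _ = 4 * C * (η / (6 * C)) := by rw [hδ_def]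
      _ = (4 / 6) * η := by field_simp
      _ ≤ η := by nlinarith
  -- put the pieces together
  have hev : ∀ᶠ n in atTop,
      |(∫ z, ψ z ∂(Pn n : Measure (E × E'))) - ∫ z, ψ z ∂(P : Measure (E × E'))| < η := by
    have := Metric.tendsto_atTop.1 hψtend η hηpos
    obtain ⟨M, hM⟩ := this
    refine eventually_atTop.2 ⟨M, fun n hn => ?_⟩
    have := hM n hn
    rwa [Real.dist_eq] at this
  obtain ⟨M, hM⟩ := eventually_atTop.1 hev
  refine ⟨M, fun n hn => ?_⟩
  rw [Real.dist_eq]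
  have e1 : |∫ z, φ z ∂(Pn n : Measure (E × E')) - ∫ z, ψ z ∂(Pn n : Measure (E × E'))| ≤ η :=
    key _ inferInstance (hmarg n) (hsndn n)
  have e2 : |∫ z, φ z ∂(P : Measure (E × E')) - ∫ z, ψ z ∂(P : Measure (E × E'))| ≤ η :=
    key _ inferInstance hPmarg hsndP
  have e3 := hM n hn
  have : |∫ z, φ z ∂(Pn n : Measure (E × E')) - ∫ z, φ z ∂(P : Measure (E × E'))| ≤ η + η + η := by
    calc |∫ z, φ z ∂(Pn n : Measure (E × E')) - ∫ z, φ z ∂(P : Measure (E × E'))|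
        ≤ |∫ z, φ z ∂(Pn n : Measure (E × E')) - ∫ z, ψ z ∂(Pn n : Measure (E × E'))|
          + |∫ z, ψ z ∂(Pn n : Measure (E × E')) - ∫ z, ψ z ∂(P : Measure (E × E'))|
          + |∫ z, ψ z ∂(P : Measure (E × E')) - ∫ z, φ z ∂(P : Measure (E × E'))| := by
            have := abs_sub_abs_le_abs_sub (0:ℝ) (0:ℝ)
            calc _ = |(∫ z, φ z ∂(Pn n : Measure (E × E')) - ∫ z, ψ z ∂(Pn n : Measure (E × E')))
                + ((∫ z, ψ z ∂(Pn n : Measure (E × E'))) - ∫ z, ψ z ∂(P : Measure (E × E')))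
                + ((∫ z, ψ z ∂(P : Measure (E × E'))) - ∫ z, φ z ∂(P : Measure (E × E')))| := by
                  ring_nf
              _ ≤ _ := by
                  refine (abs_add_le _ _).trans ?_
                  exact add_le_add_left (abs_add_le _ _) _
      _ ≤ η + η + η := by
          refine add_le_add (add_le_add e1 e3.le) ?_
          rwa [abs_sub_comm]
  calc |∫ z, φ z ∂(Pn n : Measure (E × E')) - ∫ z, φ z ∂(P : Measure (E × E'))| ≤ η + η + η := this
    _ < ε := by rw [hη_def]; linarith
end
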